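/- arXiv:2602.13560 — 2 statements merged into one kernel-verified Lean document; each statement's English description precedes it below -/
import Mathlib

section
/- Let R be a Noetherian ring with identity and let f : F₁ → F₂ and h : F₃ → F₂ be injective homomorphisms of finitely generated projective R-modules such that F₂/im(f), F₂/im(h), and F₂/(im(f) + im(h)) are all projective. Then im(f)/(im(f) ∩ im(h)) and im(h)/(im(f) ∩ im(h)) are projective, and F₂ admits an internal direct sum decomposition F₂ = (im(f) ∩ im(h)) ⊕ G ⊕ K ⊕ H with im(f) = (im(f) ∩ im(h)) ⊕ G and im(h) = (im(f) ∩ im(h)) ⊕ K. -/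
/-- If `M ⧸ p` is projective, then `p` has a complement. -/
theorem aux_exists_isCompl {R M : Type*} [Ring R] [AddCommGroup M] [Module R M]
    (p : Submodule R M) (hq : Module.Projective R (M ⧸ p)) : ∃ q, IsCompl p q := by
  obtain ⟨σ, hσ⟩ := Module.projective_lifting_property p.mkQ LinearMap.id p.mkQ_surjective
  refine ⟨LinearMap.range σ, ⟨?_, ?_⟩⟩
  · rw [Submodule.disjoint_def]
    rintro x hx ⟨y, rfl⟩
    have : y = 0 := by
      have := congrArg (fun g => g y) hσ
      simp only [LinearMap.comp_apply, LinearMap.id_apply] at this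
      rw [← this, Submodule.mkQ_apply, Submodule.Quotient.mk_eq_zero]
      exact hx
    rw [this, map_zero]
  · rw [codisjoint_iff_le_sup]
    intro x _
    have h1 : x - σ (p.mkQ x) ∈ p := by
      rw [← Submodule.Quotient.mk_eq_zero, ← Submodule.mkQ_apply, map_sub]
      have := congrArg (fun g => g (p.mkQ x)) hσ
      simp only [LinearMap.comp_apply, LinearMap.id_apply] at this
      rw [this, sub_self]
    have : x = (x - σ (p.mkQ x)) + σ (p.mkQ x) := by abel
    rw [this]
    exact Submodule.add_mem_sup h1 ⟨p.mkQ x, rfl⟩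

/-- A submodule with projective quotient of a projective module is projective. -/
theorem aux_projective_of_quotient {R M : Type*} [Ring R] [AddCommGroup M] [Module R M]
    [Module.Projective R M] (p : Submodule R M) (hq : Module.Projective R (M ⧸ p)) :
    Module.Projective R p := by
  obtain ⟨q, hc⟩ := aux_exists_isCompl p hq
  exact Module.Projective.of_split p.subtype (p.projectionOnto q hc)
    (by ext x; simp [Submodule.projectionOnto_apply_left])

/-- The subquotient `B/(A ⊓ B)` is projective when `F₂/A` and `F₂/(A ⊔ B)` are. -/
theorem aux_subquotient_projective {R F : Type*} [Ring R] [AddCommGroup F] [Module R F]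
    (A B : Submodule R F)
    (hA : Module.Projective R (F ⧸ A))
    (hAB : Module.Projective R (F ⧸ (A ⊔ B))) :
    Module.Projective R (↥B ⧸ ((A ⊓ B).comap B.subtype)) := by
  -- the image of B in F ⧸ A is projective:
  have hSA : Module.Projective R (B.map A.mkQ) := by
    refine aux_projective_of_quotient _ ?_
    exact Module.Projective.of_equiv (Submodule.quotientQuotientEquivQuotientSup A B).symm
  set φ : ↥B →ₗ[R] F ⧸ A := A.mkQ ∘ₗ B.subtype with hφ
  have hker : LinearMap.ker φ = (A ⊓ B).comap B.subtype := by
    rw [hφ, LinearMap.ker_comp, Submodule.ker_mkQ, Submodule.comap_inf,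
      Submodule.comap_subtype_self, inf_top_eq]
  have hrange : LinearMap.range φ = B.map A.mkQ := by
    rw [hφ, LinearMap.range_comp, Submodule.range_subtype]
  have e := φ.quotKerEquivRange.symm
  rw [hker, hrange] at e
  exact Module.Projective.of_equiv e

/-- Splitting a submodule `I ≤ B` with projective quotient within the ambient module. -/
theorem aux_split {R F : Type*} [Ring R] [AddCommGroup F] [Module R F]
    (I B : Submodule R F) (hIB : I ≤ B)
    (hq : Module.Projective R (↥B ⧸ (I.comap B.subtype))) :
    ∃ K : Submodule R F, K ≤ B ∧ I ⊔ K = B ∧ Disjoint I K := by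
  obtain ⟨q, hc⟩ := aux_exists_isCompl (I.comap B.subtype) hq
  refine ⟨q.map B.subtype, Submodule.map_subtype_le _ _, ?_, ?_⟩
  · have := congrArg (Submodule.map B.subtype) (codisjoint_iff.mp hc.2)
    rw [Submodule.map_sup, Submodule.map_comap_subtype, inf_eq_right.mpr hIB] at this
    rw [this, Submodule.map_top, Submodule.range_subtype]
  · rw [Submodule.disjoint_def]
    rintro x hxI ⟨y, hyq, rfl⟩
    have hyI : y ∈ I.comap B.subtype := hxI
    have : y = 0 := (Submodule.disjoint_def.mp hc.1) y hyI hyq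
    rw [this]; rfl

/-- Case 2 of the A₃ decomposition: two injections f, h into F₂ with the
relevant cokernels projective.  The subquotients im f/(im f ∩ im h) and
im h/(im f ∩ im h) are projective and F₂ = (im f ∩ im h) ⊕ G ⊕ K ⊕ H with
im f = (im f ∩ im h) ⊕ G and im h = (im f ∩ im h) ⊕ K. -/
theorem stmt_15 {R : Type*} [Ring R] [IsNoetherianRing R]
    {F₁ F₂ F₃ : Type*} [AddCommGroup F₁] [Module R F₁] [AddCommGroup F₂] [Module R F₂]
    [AddCommGroup F₃] [Module R F₃]
    [Module.Finite R F₁] [Module.Finite R F₂] [Module.Finite R F₃]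
    [Module.Projective R F₁] [Module.Projective R F₂] [Module.Projective R F₃]
    (f : F₁ →ₗ[R] F₂) (h : F₃ →ₗ[R] F₂)
    (hf : Function.Injective f) (hh : Function.Injective h)
    (hcoker₁ : Module.Projective R (F₂ ⧸ LinearMap.range f))
    (hcoker₂ : Module.Projective R (F₂ ⧸ LinearMap.range h))
    (hcoker₃ : Module.Projective R (F₂ ⧸ (LinearMap.range f ⊔ LinearMap.range h))) :
    Module.Projective R (↥(LinearMap.range f) ⧸
      ((LinearMap.range f ⊓ LinearMap.range h).comap (LinearMap.range f).subtype)) ∧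
    Module.Projective R (↥(LinearMap.range h) ⧸
      ((LinearMap.range f ⊓ LinearMap.range h).comap (LinearMap.range h).subtype)) ∧
    ∃ G K H : Submodule R F₂,
      DirectSum.IsInternal ![LinearMap.range f ⊓ LinearMap.range h, G, K, H] ∧
      LinearMap.range f = (LinearMap.range f ⊓ LinearMap.range h) ⊔ G ∧
      LinearMap.range h = (LinearMap.range f ⊓ LinearMap.range h) ⊔ K := by
  set A := LinearMap.range f with hA
  set B := LinearMap.range h with hB
  set I := A ⊓ B with hI
  -- projectivity of the two subquotients
  have hprojA : Module.Projective R (↥A ⧸ (I.comap A.subtype)) := by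
    have := aux_subquotient_projective B A hcoker₂ (by rwa [sup_comm])
    rwa [inf_comm] at this
  have hprojB : Module.Projective R (↥B ⧸ (I.comap B.subtype)) :=
    aux_subquotient_projective A B hcoker₁ hcoker₃
  refine ⟨hprojA, hprojB, ?_⟩
  -- splittings
  obtain ⟨G, hGA, hIG_sup, hIG_disj⟩ := aux_split I A inf_le_left hprojA
  obtain ⟨K, hKB, hIK_sup, hIK_disj⟩ := aux_split I B inf_le_right hprojB
  obtain ⟨H, hcH⟩ := aux_exists_isCompl (A ⊔ B) hcoker₃
  refine ⟨G, K, H, ?_, hIG_sup.symm, hIK_sup.symm⟩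
  have hIA : I ≤ A := inf_le_left
  have hIB : I ≤ B := inf_le_right
  have hHAB : Disjoint (A ⊔ B) H := hcH.1
  rw [DirectSum.isInternal_submodule_iff_iSupIndep_and_iSup_eq_top]
  constructor
  · -- independence
    rw [iSupIndep_def]
    intro i
    fin_cases i
    · refine Disjoint.mono_right
        (iSup_le fun j => iSup_le fun hj => ?_ : _ ≤ G ⊔ K ⊔ H) ?_
      case refine_1 =>
        fin_cases j
        · exact absurd rfl hj
        · exact le_sup_of_le_left le_sup_left
        · exact le_sup_of_le_left le_sup_right
        · exact le_sup_right
      rw [Submodule.disjoint_def]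
      intro x hxI hx
      obtain ⟨y, hy, z, hz, rfl⟩ := Submodule.mem_sup.mp hx
      obtain ⟨g, hg, k, hk, rfl⟩ := Submodule.mem_sup.mp hy
      have hgA : g ∈ A := hGA hg
      have hkB : k ∈ B := hKB hk
      have hz0 : z = 0 := by
        have hzAB : z ∈ A ⊔ B := by
          have : (g + k + z) - (g + k) ∈ A ⊔ B := by
            refine Submodule.sub_mem _ (le_sup_left (a := A) (hIA hxI)) ?_
            exact Submodule.add_mem_sup hgA hkB
          simpa using this
        exact (Submodule.disjoint_def.mp hHAB) z hzAB hz
      rw [hz0, add_zero] at hxI ⊢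
      have hg0 : g = 0 := by
        have hgB : g ∈ B := by
          have : (g + k) - k ∈ B := Submodule.sub_mem _ (hIB hxI) hkB
          simpa using this
        exact (Submodule.disjoint_def.mp hIG_disj) g ⟨hgA, hgB⟩ hg
      rw [hg0, zero_add] at hxI ⊢
      exact (Submodule.disjoint_def.mp hIK_disj) k hxI hk
    · refine Disjoint.mono_right
        (iSup_le fun j => iSup_le fun hj => ?_ : _ ≤ I ⊔ K ⊔ H) ?_
      case refine_1 =>
        fin_cases j
        · exact le_sup_of_le_left le_sup_left
        · exact absurd rfl hj
        · exact le_sup_of_le_left le_sup_right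
        · exact le_sup_right
      rw [Submodule.disjoint_def]
      intro x hxG hx
      obtain ⟨y, hy, z, hz, rfl⟩ := Submodule.mem_sup.mp hx
      obtain ⟨i0, hi0, k, hk, rfl⟩ := Submodule.mem_sup.mp hy
      have hkB : k ∈ B := hKB hk
      have hz0 : z = 0 := by
        have hzAB : z ∈ A ⊔ B := by
          have : (i0 + k + z) - (i0 + k) ∈ A ⊔ B := by
            refine Submodule.sub_mem _ (le_sup_left (a := A) (hGA hxG)) ?_
            exact Submodule.add_mem_sup (hIA hi0) hkB
          simpa using this
        exact (Submodule.disjoint_def.mp hHAB) z hzAB hz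
      rw [hz0, add_zero] at hxG ⊢
      have hk0 : k = 0 := by
        have hkA : k ∈ A := by
          have : (i0 + k) - i0 ∈ A := Submodule.sub_mem _ (hGA hxG) (hIA hi0)
          simpa using this
        exact (Submodule.disjoint_def.mp hIK_disj) k ⟨hkA, hkB⟩ hk
      rw [hk0, add_zero] at hxG ⊢
      exact ((Submodule.disjoint_def.mp hIG_disj) i0 hi0 hxG).symm ▸ rfl
    · refine Disjoint.mono_right
        (iSup_le fun j => iSup_le fun hj => ?_ : _ ≤ I ⊔ G ⊔ H) ?_
      case refine_1 =>
        fin_cases j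
        · exact le_sup_of_le_left le_sup_left
        · exact le_sup_of_le_left le_sup_right
        · exact absurd rfl hj
        · exact le_sup_right
      rw [Submodule.disjoint_def]
      intro x hxK hx
      obtain ⟨y, hy, z, hz, rfl⟩ := Submodule.mem_sup.mp hx
      obtain ⟨i0, hi0, g, hg, rfl⟩ := Submodule.mem_sup.mp hy
      have hgA : g ∈ A := hGA hg
      have hz0 : z = 0 := by
        have hzAB : z ∈ A ⊔ B := by
          have : (i0 + g + z) - (i0 + g) ∈ A ⊔ B := by
            refine Submodule.sub_mem _ (le_sup_right (b := B) (hKB hxK)) ?_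
            exact (le_sup_left : A ≤ A ⊔ B) (Submodule.add_mem _ (hIA hi0) hgA)
          simpa using this
        exact (Submodule.disjoint_def.mp hHAB) z hzAB hz
      rw [hz0, add_zero] at hxK ⊢
      have hg0 : g = 0 := by
        have hgB : g ∈ B := by
          have : (i0 + g) - i0 ∈ B := Submodule.sub_mem _ (hKB hxK) (hIB hi0)
          simpa using this
        exact (Submodule.disjoint_def.mp hIG_disj) g ⟨hgA, hgB⟩ hg
      rw [hg0, add_zero] at hxK ⊢
      exact (Submodule.disjoint_def.mp hIK_disj) i0 hi0 hxK
    · refine Disjoint.mono_right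
        (iSup_le fun j => iSup_le fun hj => ?_ : _ ≤ I ⊔ G ⊔ K) ?_
      case refine_1 =>
        fin_cases j
        · exact le_sup_of_le_left le_sup_left
        · exact le_sup_of_le_left le_sup_right
        · exact le_sup_right
        · exact absurd rfl hj
      refine Disjoint.mono_right ?_ hHAB.symm
      refine sup_le (sup_le (le_trans hIA le_sup_left) (le_trans hGA le_sup_left))
        (le_trans hKB le_sup_right)
  · -- the supremum is everything
    have hsup4 : I ⊔ G ⊔ K ⊔ H = ⊤ := by
      have h1 : A ⊔ K = A ⊔ B := by
        rw [← hIK_sup, ← sup_assoc, sup_eq_left.mpr hIA]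
      rw [hIG_sup, h1, codisjoint_iff.mp hcH.2]
    apply le_antisymm le_top
    rw [← hsup4]
    exact sup_le (sup_le (sup_le
      (le_iSup ![I, G, K, H] 0) (le_iSup ![I, G, K, H] 1))
      (le_iSup ![I, G, K, H] 2)) (le_iSup ![I, G, K, H] 3)
end

section
/- Let R be a Noetherian ring with identity, P a totally ordered poset, and F : P → R-Mod a pointwise finitely generated persistence module such that for every x ≤ y the module F_x is projective and coker(F_{x,y}) is projective. Then for any fixed z ∈ P, the chain of images {im(F_{x,z}) : x ≤ z} and the chain of kernels {ker(F_{z,y}) : y ≥ z} are both finite sets of submodules of F_z. -/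
open LinearMap Submodule

/-- A submodule with projective quotient is a direct summand. -/
lemma aux_compl_of_proj_quot {R M : Type*} [Ring R] [AddCommGroup M] [Module R M]
    (p : Submodule R M) (h : Module.Projective R (M ⧸ p)) : ∃ q, IsCompl p q := by
  obtain ⟨s, hs⟩ := Module.projective_lifting_property p.mkQ LinearMap.id p.mkQ_surjective
  have hsec : ∀ t : M ⧸ p, p.mkQ (s t) = t := fun t => by
    have := congrArg (fun g => g t) hs; simpa using this
  refine ⟨LinearMap.range s, ?_, ?_⟩
  · rw [disjoint_def]
    rintro x hxp ⟨t, rfl⟩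
    have h0 : p.mkQ (s t) = 0 := by
      simpa [Submodule.mkQ_apply, Submodule.Quotient.mk_eq_zero] using hxp
    rw [hsec t] at h0
    rw [h0, map_zero]
  · rw [codisjoint_iff, eq_top_iff]
    intro x _
    rw [Submodule.mem_sup]
    refine ⟨x - s (p.mkQ x), ?_, s (p.mkQ x), ⟨_, rfl⟩, by abel⟩
    have h0 : p.mkQ (x - s (p.mkQ x)) = 0 := by
      rw [map_sub, hsec, sub_self]
    have h2 : x - s (p.mkQ x) ∈ LinearMap.ker p.mkQ := h0
    rwa [Submodule.ker_mkQ] at h2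

/-- The kernel of a map with projective cokernel out of anything into a projective module
is a direct summand. -/
lemma aux_compl_ker {R M N : Type*} [Ring R] [AddCommGroup M] [Module R M]
    [AddCommGroup N] [Module R N] [Module.Projective R N] (f : M →ₗ[R] N)
    (h : Module.Projective R (N ⧸ LinearMap.range f)) :
    ∃ q, IsCompl (LinearMap.ker f) q := by
  obtain ⟨q, hq⟩ := aux_compl_of_proj_quot (LinearMap.range f) h
  have hrproj : Module.Projective R (LinearMap.range f) :=
    Module.Projective.of_split (LinearMap.range f).subtype
      (Submodule.projectionOnto _ _ hq)
      (by ext x; simp [Submodule.projectionOnto_apply_left])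
  obtain ⟨σ, hσ⟩ := Module.projective_lifting_property f.rangeRestrict LinearMap.id
    f.surjective_rangeRestrict
  have hsec : ∀ t : LinearMap.range f, f.rangeRestrict (σ t) = t := fun t => by
    have := congrArg (fun g => g t) hσ; exact this
  have hfσ : ∀ t : LinearMap.range f, f (σ t) = (t : N) := fun t => by
    have := congrArg (Subtype.val) (hsec t)
    simpa using this
  refine ⟨LinearMap.range σ, ?_, ?_⟩
  · rw [disjoint_def]
    rintro x hxk ⟨t, rfl⟩
    have h0 : f.rangeRestrict (σ t) = 0 := by
      ext; simpa using hxk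
    rw [hsec t] at h0
    rw [h0, map_zero]
  · rw [codisjoint_iff, eq_top_iff]
    intro x _
    rw [Submodule.mem_sup]
    refine ⟨x - σ (f.rangeRestrict x), ?_, σ (f.rangeRestrict x), ⟨_, rfl⟩, by abel⟩
    have : f (x - σ (f.rangeRestrict x)) = 0 := by
      rw [map_sub, hfσ]
      simp [sub_self]
    exact this

/-- No strictly descending sequence of complemented submodules in a Noetherian module. -/
lemma aux_no_antitone {R M : Type*} [Ring R] [AddCommGroup M] [Module R M]
    [IsNoetherian R M] (f : ℕ → Submodule R M)
    (hlt : ∀ n, f (n + 1) < f n) (hcomp : ∀ n, ∃ q, IsCompl (f n) q) : False := by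
  choose c hc using fun n => hcomp (n + 1)
  set D : ℕ → Submodule R M := fun n => f n ⊓ c n with hD
  have hDle : ∀ n, D n ≤ f n := fun n => inf_le_left
  have hDdisj : ∀ n, Disjoint (D n) (f (n + 1)) := fun n =>
    ((hc n).disjoint.symm.mono_left inf_le_right)
  have hsup : ∀ n, f (n + 1) ⊔ D n = f n := by
    intro n
    have h1 : f (n + 1) ⊔ c n = ⊤ := (hc n).sup_eq_top
    calc f (n + 1) ⊔ D n = f (n + 1) ⊔ (c n ⊓ f n) := by rw [hD]; rw [inf_comm]
      _ = (f (n + 1) ⊔ c n) ⊓ f n := (sup_inf_assoc_of_le _ (le_of_lt (hlt n))).symm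
      _ = f n := by rw [h1, top_inf_eq]
  have hDne : ∀ n, D n ≠ ⊥ := by
    intro n h
    have := hsup n
    rw [h, sup_bot_eq] at this
    exact absurd this (ne_of_lt (hlt n))
  set S : ℕ → Submodule R M := fun n => (Finset.range n).sup D with hS
  have hSsucc : ∀ n, S (n + 1) = D n ⊔ S n := by
    intro n; rw [hS]; simp [Finset.range_add_one]
  have key : ∀ n, Disjoint (S n) (f n) := by
    intro n
    induction n with
    | zero => simp [hS]
    | succ n ih =>
      rw [disjoint_def]
      intro x hx1 hx2
      rw [hSsucc, Submodule.mem_sup] at hx1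
      obtain ⟨d, hd, y, hy, rfl⟩ := hx1
      have hxf : d + y ∈ f n := le_of_lt (hlt n) hx2
      have hdf : d ∈ f n := hDle n hd
      have hyf : y ∈ f n := by
        have : (d + y) - d ∈ f n := Submodule.sub_mem _ hxf hdf
        simpa using this
      have hy0 : y = 0 := disjoint_def.mp ih y hy hyf
      subst hy0
      rw [add_zero] at hx2 ⊢
      exact disjoint_def.mp (hDdisj n) d hd hx2
  have hmono : Monotone S := fun a b hab =>
    Finset.sup_mono (Finset.range_subset_range.mpr hab)
  have hstrict : ∀ n, S n ≠ S (n + 1) := by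
    intro n heq
    have hDS : D n ≤ S n := by
      rw [heq, hSsucc]; exact le_sup_left
    exact hDne n (le_bot_iff.mp (le_trans (le_inf hDS (hDle n)) (key n).le_bot))
  obtain ⟨n, hn⟩ := monotone_stabilizes_iff_noetherian.mpr inferInstance ⟨S, hmono⟩
  exact hstrict n (hn (n + 1) (Nat.le_succ n))

/-- A chain of complemented submodules of a Noetherian module is finite. -/
lemma aux_chain_finite {R M : Type*} [Ring R] [AddCommGroup M] [Module R M]
    [IsNoetherian R M] (s : Set (Submodule R M))
    (hchain : ∀ p ∈ s, ∀ q ∈ s, p ≤ q ∨ q ≤ p)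
    (hcomp : ∀ p ∈ s, ∃ q, IsCompl p q) : s.Finite := by
  by_contra hinf
  have hinf' : s.Infinite := hinf
  obtain e := hinf'.natEmbedding
  set f : ℕ → Submodule R M := fun n => (e n : Submodule R M) with hf
  have hinj : Function.Injective f := fun a b h => e.injective (Subtype.ext h)
  have hmem : ∀ n, f n ∈ s := fun n => (e n).2
  obtain ⟨g, hg | hg⟩ := exists_increasing_or_nonincreasing_subseq (· < · : Submodule R M → Submodule R M → Prop) f
  · have hmono : Monotone (fun n => f (g n)) := by
      intro a b hab
      rcases lt_or_eq_of_le hab with h | h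
      · exact le_of_lt (hg a b h)
      · rw [h]
    obtain ⟨n, hn⟩ := monotone_stabilizes_iff_noetherian.mpr inferInstance
      ⟨fun n => f (g n), hmono⟩
    exact absurd (hn (n + 1) (Nat.le_succ n)) (ne_of_lt (hg n (n + 1) (Nat.lt_succ_self n)))
  · refine aux_no_antitone (fun n => f (g n)) ?_ (fun n => hcomp _ (hmem _))
    intro n
    have hne : f (g (n + 1)) ≠ f (g n) := fun h =>
      Nat.succ_ne_self n (g.injective (hinj h))
    rcases hchain _ (hmem (g n)) _ (hmem (g (n + 1))) with h | h
    · exact absurd (lt_of_le_of_ne h (Ne.symm hne)) (hg n (n + 1) (Nat.lt_succ_self n))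
    · exact lt_of_le_of_ne h hne

/-- For a pointwise finitely generated totally ordered persistence module over
a Noetherian ring with pointwise projective values and projective cokernels of
all structure maps, the chain of images and the chain of kernels at any fixed
index z are finite sets. -/
theorem stmt_18 {R : Type*} [Ring R] [IsNoetherianRing R] {P : Type*} [LinearOrder P]
    (F : P → Type*) [∀ x, AddCommGroup (F x)] [∀ x, Module R (F x)]
    (Fmap : ∀ x y : P, x ≤ y → (F x →ₗ[R] F y))
    (Fmap_id : ∀ x, Fmap x x le_rfl = LinearMap.id)
    (Fmap_comp : ∀ x y z (hxy : x ≤ y) (hyz : y ≤ z),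
      (Fmap y z hyz).comp (Fmap x y hxy) = Fmap x z (hxy.trans hyz))
    (hfg : ∀ x, Module.Finite R (F x))
    (hproj : ∀ x, Module.Projective R (F x))
    (hcoker : ∀ x y (h : x ≤ y),
      Module.Projective R (F y ⧸ LinearMap.range (Fmap x y h)))
    (z : P) :
    {S : Submodule R (F z) | ∃ (x : P) (h : x ≤ z),
        S = LinearMap.range (Fmap x z h)}.Finite ∧
    {S : Submodule R (F z) | ∃ (y : P) (h : z ≤ y),
        S = LinearMap.ker (Fmap z y h)}.Finite := by
  haveI := hfg z
  constructor
  · apply aux_chain_finite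
    · rintro _ ⟨x, hx, rfl⟩ _ ⟨x', hx', rfl⟩
      rcases le_total x x' with h | h
      · left
        rw [← Fmap_comp x x' z h hx']
        exact LinearMap.range_comp_le_range _ _
      · right
        rw [← Fmap_comp x' x z h hx]
        exact LinearMap.range_comp_le_range _ _
    · rintro _ ⟨x, hx, rfl⟩
      exact aux_compl_of_proj_quot _ (hcoker x z hx)
  · apply aux_chain_finite
    · rintro _ ⟨y, hy, rfl⟩ _ ⟨y', hy', rfl⟩
      rcases le_total y y' with h | h
      · left
        rw [← Fmap_comp z y y' hy h]
        exact LinearMap.ker_le_ker_comp _ _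
      · right
        rw [← Fmap_comp z y' y hy' h]
        exact LinearMap.ker_le_ker_comp _ _
    · rintro _ ⟨y, hy, rfl⟩
      haveI := hproj y
      exact aux_compl_ker _ (hcoker z y hy)
end
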